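/- For every irrational α ∈ (0,1) and every k ∈ ℕ, the word v_{α,0}(1) … v_{α,0}(q_k − 2) is a palindrome, where q_k is the k-th continued fraction denominator of α. -/

import Mathlib

open GenContFract
variable {α : ℝ}

lemma my_not_term (hirr : Irrational α) (n : ℕ) : ¬(GenContFract.of α).TerminatedAt n := by
  intro h
  have ht : (GenContFract.of α).Terminates := ⟨n, h⟩
  rw [terminates_iff_rat] at ht
  obtain ⟨q, rfl⟩ := ht
  exact hirr ⟨q, rfl⟩

lemma my_stream (hirr : Irrational α) (n : ℕ) :
    ∃ ifp, IntFractPair.stream α n = some ifp ∧ 0 < ifp.fr := by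
  have hne : IntFractPair.stream α (n+1) ≠ none := by
    intro h
    exact my_not_term hirr n (of_terminatedAt_n_iff_succ_nth_intFractPair_stream_eq_none.2 h)
  rw [Ne, IntFractPair.succ_nth_stream_eq_none_iff] at hne
  push_neg at hne
  obtain ⟨h1, h2⟩ := hne
  obtain ⟨ifp, hifp⟩ := Option.ne_none_iff_exists'.1 h1
  exact ⟨ifp, hifp, lt_of_le_of_ne (IntFractPair.nth_stream_fr_nonneg hifp) (fun h0 => h2 ifp hifp h0.symm)⟩
lemma my_den_pos (hirr : Irrational α) (n : ℕ) : (1:ℝ) ≤ (GenContFract.of α).dens n := by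
  have h := succ_nth_fib_le_of_nth_den (v := α) (n := n) (Or.inr (my_not_term hirr _))
  calc (1:ℝ) ≤ (Nat.fib (n+1) : ℝ) := by
        exact_mod_cast Nat.fib_pos.2 n.succ_pos
    _ ≤ _ := h

noncomputable def Ed (α : ℝ) (f : ℕ → IntFractPair ℝ) (n : ℕ) : ℝ :=
  (f n).fr⁻¹ * (GenContFract.of α).dens n + ((GenContFract.of α).contsAux n).b

section
variable {f : ℕ → IntFractPair ℝ}
  (hf : ∀ n, IntFractPair.stream α n = some (f n) ∧ 0 < (f n).fr)

include hf

lemma Ed_pos (hirr : Irrational α) (n : ℕ) : 0 < Ed α f n := by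
  have h1 := (hf n).2
  have h2 := my_den_pos hirr n
  have h3 := zero_le_of_contsAux_b (v := α) (n := n)
  have : 0 < (f n).fr⁻¹ := inv_pos.2 h1
  unfold Ed; nlinarith

lemma my_eps (hirr : Irrational α) (n : ℕ) :
    (GenContFract.of α).dens n * α - (GenContFract.of α).nums n = (-1)^n / Ed α f n := by
  have h := sub_convs_eq (hf n).1
  simp only [(hf n).2.ne', if_false] at h
  rw [conv_eq_num_div_den] at h
  have hden : (0:ℝ) < (GenContFract.of α).dens n := lt_of_lt_of_le one_pos (my_den_pos hirr n)
  have hE : 0 < Ed α f n := Ed_pos hf hirr n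
  have hB : ((GenContFract.of α).contsAux (n+1)).b = (GenContFract.of α).dens n := rfl
  rw [hB] at h
  have := congrArg (fun x => (GenContFract.of α).dens n * x) h
  beta_reduce at this
  rw [mul_sub] at this
  rw [mul_div_cancel₀ _ hden.ne'] at this
  rw [this, mul_div_assoc', mul_div_mul_left _ _ hden.ne']
  rfl
end

section
variable {f : ℕ → IntFractPair ℝ}
  (hf : ∀ n, IntFractPair.stream α n = some (f n) ∧ 0 < (f n).fr)
include hf

lemma my_succ (n : ℕ) : f (n+1) = IntFractPair.of (f n).fr⁻¹ := by
  have h := IntFractPair.stream_succ_of_some (hf n).1 (hf n).2.ne'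
  have h2 := (hf (n+1)).1
  rw [h] at h2
  exact (Option.some_inj.1 h2).symm

lemma my_fr_lt_one (n : ℕ) : (f n).fr < 1 :=
  IntFractPair.nth_stream_fr_lt_one (hf n).1

lemma my_s_get (n : ℕ) : (GenContFract.of α).s.get? n = some ⟨1, ((f (n+1)).b : ℝ)⟩ :=
  get?_of_eq_some_of_succ_get?_intFractPair_stream (hf (n+1)).1

lemma my_b_ge_one (n : ℕ) : 1 ≤ (f (n+1)).b :=
  IntFractPair.one_le_succ_nth_stream_b (hf (n+1)).1

lemma my_dens_rec (n : ℕ) :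
    (GenContFract.of α).dens (n+1)
      = ((f (n+1)).b : ℝ) * (GenContFract.of α).dens n + ((GenContFract.of α).contsAux n).b := by
  have h := contsAux_recurrence (my_s_get hf n) rfl rfl
  have : (GenContFract.of α).dens (n+1) = ((GenContFract.of α).contsAux (n+2)).b := rfl
  rw [this, h]
  show ((f (n+1)).b : ℝ) * _ + 1 * _ = _
  rw [one_mul]
  rfl

lemma my_fr_split (n : ℕ) :
    (f n).fr⁻¹ = ((f (n+1)).b : ℝ) + (f (n+1)).fr := by
  rw [my_succ hf n]
  show _ = (⌊(f n).fr⁻¹⌋ : ℝ) + Int.fract ((f n).fr⁻¹)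
  rw [Int.floor_add_fract]
end

section
variable {f : ℕ → IntFractPair ℝ}
  (hf : ∀ n, IntFractPair.stream α n = some (f n) ∧ 0 < (f n).fr)
include hf

lemma Ed_succ_gt (hirr : Irrational α) (n : ℕ) : Ed α f n < Ed α f (n+1) := by
  have h1 : Ed α f n = (GenContFract.of α).dens (n+1) + (f (n+1)).fr * (GenContFract.of α).dens n := by
    unfold Ed
    rw [my_fr_split hf n, my_dens_rec hf n]; ring
  have h2 : Ed α f (n+1) = (f (n+1)).fr⁻¹ * (GenContFract.of α).dens (n+1) + (GenContFract.of α).dens n := rfl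
  have hfr0 := (hf (n+1)).2
  have hfr1 := my_fr_lt_one hf (n+1)
  have hd1 := my_den_pos hirr n
  have hd2 := my_den_pos hirr (n+1)
  have hinv : 1 < (f (n+1)).fr⁻¹ := one_lt_inv₀ hfr0 |>.2 hfr1
  rw [h1, h2]
  nlinarith

end

section
variable {f : ℕ → IntFractPair ℝ}
  (hf : ∀ n, IntFractPair.stream α n = some (f n) ∧ 0 < (f n).fr)
include hf

lemma Ed_mono (hirr : Irrational α) {m n : ℕ} (h : m < n) : Ed α f m < Ed α f n :=
  strictMono_nat_of_lt_succ (Ed_succ_gt hf hirr) h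

lemma my_num_den_int (n : ℕ) :
    (∃ p : ℤ, ((p:ℝ) = (GenContFract.of α).nums n)) ∧
    (∃ d : ℤ, ((d:ℝ) = (GenContFract.of α).dens n)) := by
  induction n using Nat.strong_induction_on with
  | _ n ih =>
    match n with
    | 0 =>
      refine ⟨⟨⌊α⌋, ?_⟩, ⟨1, ?_⟩⟩
      · rw [zeroth_num_eq_h, of_h_eq_floor]
      · rw [zeroth_den_eq_one]; norm_num
    | 1 =>
      refine ⟨⟨(f 1).b * ⌊α⌋ + 1, ?_⟩, ⟨(f 1).b, ?_⟩⟩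
      · rw [first_num_eq (my_s_get hf 0)]
        push_cast
        rw [of_h_eq_floor]
      · rw [first_den_eq (my_s_get hf 0)]
    | (n+2) =>
      obtain ⟨⟨p0, hp0⟩, ⟨d0, hd0⟩⟩ := ih n (by omega)
      obtain ⟨⟨p1, hp1⟩, ⟨d1, hd1⟩⟩ := ih (n+1) (by omega)
      refine ⟨⟨(f (n+2)).b * p1 + p0, ?_⟩, ⟨(f (n+2)).b * d1 + d0, ?_⟩⟩
      · rw [nums_recurrence (my_s_get hf (n+1)) hp0.symm hp1.symm]
        push_cast; ring
      · rw [dens_recurrence (my_s_get hf (n+1)) hd0.symm hd1.symm]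
        push_cast; ring
end

section
variable {f : ℕ → IntFractPair ℝ}
  (hf : ∀ n, IntFractPair.stream α n = some (f n) ∧ 0 < (f n).fr)
include hf

lemma my_best (hirr : Irrational α) (a : ℕ) (j : ℕ) (hj1 : 1 ≤ j)
    (hjq : (j:ℝ) < (GenContFract.of α).dens (a+1)) (p : ℤ) :
    1 / Ed α f (a+1) < |(j:ℝ) * α - p| := by
  obtain ⟨⟨Pa, hPa⟩, ⟨Qa, hQa⟩⟩ := my_num_den_int hf a
  obtain ⟨⟨P1, hP1⟩, ⟨Q1, hQ1⟩⟩ := my_num_den_int hf (a+1)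
  set Ea := Ed α f a with hEa
  set E1 := Ed α f (a+1) with hE1
  have hEapos : 0 < Ea := Ed_pos hf hirr a
  have hE1pos : 0 < E1 := Ed_pos hf hirr (a+1)
  have hElt : Ea < E1 := Ed_succ_gt hf hirr a
  have hQa1 : 1 ≤ Qa := by
    have := my_den_pos hirr a; rw [← hQa] at this; exact_mod_cast this
  have hQ11 : 1 ≤ Q1 := by
    have := my_den_pos hirr (a+1); rw [← hQ1] at this; exact_mod_cast this
  have hjQ1 : (j:ℤ) < Q1 := by
    rw [← hQ1] at hjq; exact_mod_cast hjq
  -- determinant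
  have hdet : (GenContFract.of α).nums a * (GenContFract.of α).dens (a+1) -
      (GenContFract.of α).dens a * (GenContFract.of α).nums (a+1) = (-1)^(a+1) :=
    SimpContFract.determinant (s := SimpContFract.of α) (my_not_term hirr a)
  set σ : ℤ := (-1)^(a+1) with hσdef
  have hσ : Pa * Q1 - Qa * P1 = σ := by
    have : ((Pa * Q1 - Qa * P1 : ℤ) : ℝ) = ((σ : ℤ) : ℝ) := by
      push_cast
      rw [hPa, hQa, hP1, hQ1]
      rw [hdet, hσdef]
      push_cast
      ring
    exact_mod_cast this
  have hσσ : σ * σ = 1 := by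
    rw [hσdef, ← pow_add]
    exact Even.neg_one_pow ⟨a+1, by ring⟩
  set x : ℤ := σ * (p * Q1 - j * P1) with hxdef
  set y : ℤ := σ * (j * Pa - p * Qa) with hydef
  have hxy1 : x * Qa + y * Q1 = j := by
    rw [hxdef, hydef]
    linear_combination (σ * j) * hσ + (j:ℤ) * hσσ
  have hxy2 : x * Pa + y * P1 = p := by
    rw [hxdef, hydef]
    linear_combination (σ * p) * hσ + p * hσσ
  -- epsilon values
  have hea : (Qa:ℝ) * α - Pa = (-1)^a / Ea := by
    rw [hQa, hPa]; exact my_eps hf hirr a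
  have he1 : (Q1:ℝ) * α - P1 = (-1)^(a+1) / E1 := by
    rw [hQ1, hP1]; exact my_eps hf hirr (a+1)
  have hreal : (j:ℝ) * α - p = (-1)^a * ((x:ℝ)/Ea - (y:ℝ)/E1) := by
    have c1 : (x:ℝ) * Qa + (y:ℝ) * Q1 = (j:ℝ) := by exact_mod_cast hxy1
    have c2 : (x:ℝ) * Pa + (y:ℝ) * P1 = (p:ℝ) := by exact_mod_cast hxy2
    calc (j:ℝ) * α - p = (x:ℝ) * ((Qa:ℝ) * α - Pa) + (y:ℝ) * ((Q1:ℝ) * α - P1) := by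
          rw [← c1, ← c2]; ring
      _ = (x:ℝ) * ((-1)^a / Ea) + (y:ℝ) * ((-1)^(a+1) / E1) := by rw [hea, he1]
      _ = (-1)^a * ((x:ℝ)/Ea - (y:ℝ)/E1) := by rw [pow_succ]; ring
  rw [hreal, abs_mul, abs_pow, abs_neg, abs_one, one_pow, one_mul]
  -- case analysis
  have hQaR : (1:ℝ) ≤ (Qa:ℝ) := by exact_mod_cast hQa1
  have hQ1R : (1:ℝ) ≤ (Q1:ℝ) := by exact_mod_cast hQ11
  rcases lt_trichotomy y 0 with hy | hy | hy
  · -- y < 0, then x > 0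
    have hyR : (y:ℝ) ≤ -1 := by exact_mod_cast Int.le_sub_one_of_lt hy
    have hx : 0 < x := by
      by_contra hx
      push_neg at hx
      have h1 : x * Qa ≤ 0 := mul_nonpos_of_nonpos_of_nonneg hx (by omega)
      have h2 : y * Q1 ≤ -1 := by nlinarith
      have : (j:ℤ) ≤ -1 := by rw [← hxy1]; linarith
      omega
    have hxR : (1:ℝ) ≤ (x:ℝ) := by exact_mod_cast hx
    have ha : 0 < (x:ℝ)/Ea := div_pos (by linarith) hEapos
    have hb : 0 ≤ (-(y:ℝ)-1)/E1 := div_nonneg (by linarith) hE1pos.le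
    have key : (x:ℝ)/Ea - (y:ℝ)/E1 - 1/E1 = (x:ℝ)/Ea + (-(y:ℝ)-1)/E1 := by ring
    have hpos : 0 < (x:ℝ)/Ea - (y:ℝ)/E1 := by
      have : 0 < 1/E1 := by positivity
      linarith
    rw [abs_of_pos hpos]
    linarith
  · -- y = 0
    have hx : 1 ≤ x := by
      rw [hy, zero_mul, add_zero] at hxy1
      by_contra hx
      push_neg at hx
      have h1 : x * Qa ≤ 0 := mul_nonpos_of_nonpos_of_nonneg (by omega) (by omega)
      omega
    have hxR : (1:ℝ) ≤ (x:ℝ) := by exact_mod_cast hx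
    have hyR : (y:ℝ) = 0 := by exact_mod_cast hy
    rw [hyR, zero_div, sub_zero]
    have h1 : 1/E1 < 1/Ea := one_div_lt_one_div_of_lt hEapos hElt
    have h2 : 1/Ea ≤ (x:ℝ)/Ea := by gcongr
    rw [abs_of_pos (by positivity : (0:ℝ) < (x:ℝ)/Ea)]
    linarith
  · -- y > 0, then x < 0
    have hyR : (1:ℝ) ≤ (y:ℝ) := by exact_mod_cast hy
    have hx : x < 0 := by
      by_contra hx
      push_neg at hx
      have h1 : 0 ≤ x * Qa := mul_nonneg hx (by omega)
      have h2 : Q1 ≤ y * Q1 := by nlinarith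
      have : Q1 ≤ (j:ℤ) := by rw [← hxy1]; linarith
      omega
    have hxR : (x:ℝ) ≤ -1 := by exact_mod_cast Int.le_sub_one_of_lt hx
    have ha : 0 < (-(x:ℝ))/Ea := div_pos (by linarith) hEapos
    have hb : 0 ≤ ((y:ℝ)-1)/E1 := div_nonneg (by linarith) hE1pos.le
    have key : -((x:ℝ)/Ea - (y:ℝ)/E1) - 1/E1 = (-(x:ℝ))/Ea + ((y:ℝ)-1)/E1 := by ring
    have hneg : (x:ℝ)/Ea - (y:ℝ)/E1 < 0 := by
      have : 0 < 1/E1 := by positivity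
      linarith
    rw [abs_of_neg hneg]
    linarith

end

lemma my_fract_pos (hirr : Irrational α) {n : ℕ} (hn : 1 ≤ n) : 0 < Int.fract ((n:ℝ) * α) := by
  have hi : Irrational ((n:ℝ) * α) := by
    have := hirr.natCast_mul (m := n) (by omega)
    exact this
  have h2 : Irrational (Int.fract ((n:ℝ)*α)) := by
    have := hi.sub_intCast ⌊(n:ℝ)*α⌋
    exact this
  rcases lt_or_eq_of_le (Int.fract_nonneg ((n:ℝ)*α)) with h | h
  · exact h
  · exact absurd h.symm (by simpa using h2.ne_int 0)

lemma my_fract_ne (hirr : Irrational α) (hα1 : α < 1) {n : ℕ} (hn : 1 ≤ n) :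
    Int.fract ((n:ℝ) * α) ≠ 1 - α := by
  intro h
  have hfr : Int.fract ((n:ℝ)*α) = (n:ℝ)*α - ⌊(n:ℝ)*α⌋ := rfl
  have hi : Irrational (((n:ℕ)+1:ℕ) * α) := hirr.natCast_mul (by omega)
  have : (((n:ℕ)+1:ℕ):ℝ) * α = ((1 + ⌊(n:ℝ)*α⌋ : ℤ) : ℝ) := by
    push_cast
    rw [hfr] at h
    linarith
  exact (hi.ne_int _) this

lemma my_core (hirr : Irrational α) (hα0 : 0 < α) (hα1 : α < 1)
    (k Q : ℕ) (hk : 1 ≤ k) (hQ : (Q:ℝ) = (GenContFract.of α).dens k) (hQ3 : 3 ≤ Q)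
    (n m : ℕ) (hn : 1 ≤ n) (hm : 1 ≤ m) (hnm : n + m + 1 = Q)
    (hθn : 1 - α ≤ Int.fract ((n:ℝ)*α)) : 1 - α ≤ Int.fract ((m:ℝ)*α) := by
  choose f hf using fun j => my_stream (α := α) hirr j
  obtain ⟨a, rfl⟩ : ∃ a, k = a + 1 := ⟨k - 1, by omega⟩
  obtain ⟨⟨P, hP⟩, -⟩ := my_num_den_int hf (a+1)
  set E := Ed α f (a+1) with hEdef
  have hEpos : 0 < E := Ed_pos hf hirr (a+1)
  set ε := (Q:ℝ)*α - P with hεdef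
  have hεeq : ε = (-1)^(a+1)/E := by rw [hεdef, hQ, hP]; exact my_eps hf hirr (a+1)
  have hεabs : |ε| = 1/E := by
    rw [hεeq, abs_div, abs_pow, abs_neg, abs_one, one_pow, abs_of_pos hEpos]
  have best : ∀ (j:ℕ), 1 ≤ j → j < Q → ∀ p:ℤ, |ε| < |(j:ℝ)*α - p| := by
    intro j h1 h2 p
    rw [hεabs]
    refine my_best hf hirr a j h1 ?_ p
    rw [← hQ]
    exact_mod_cast h2
  have hQgt1 : (1:ℝ) < Q := by exact_mod_cast (by omega : 1 < Q)
  have hεα : |ε| < α := by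
    have := best 1 le_rfl (by omega) 0
    simpa [abs_of_pos hα0] using this
  have hεα' : |ε| < 1 - α := by
    have := best 1 le_rfl (by omega) 1
    have h2 : |((1:ℕ):ℝ)*α - ((1:ℤ):ℝ)| = 1 - α := by
      push_cast
      rw [one_mul, abs_of_neg (by linarith)]
      ring
    rwa [h2] at this
  set θn := Int.fract ((n:ℝ)*α) with hθndef
  set θm := Int.fract ((m:ℝ)*α) with hθmdef
  have hθn1 : θn < 1 := Int.fract_lt_one _
  have hθm1 : θm < 1 := Int.fract_lt_one _
  have hθn0 : 0 < θn := my_fract_pos hirr hn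
  have hθm0 : 0 < θm := my_fract_pos hirr hm
  have hθngt : 1 - α < θn := lt_of_le_of_ne hθn (Ne.symm (my_fract_ne hirr hα1 hn))
  by_contra hcon
  push_neg at hcon
  have hθmlt : θm < 1 - α := lt_of_le_of_ne hcon.le (my_fract_ne hirr hα1 hm)
  clear hθmlt
  set Z : ℤ := P - ⌊(n:ℝ)*α⌋ - ⌊(m:ℝ)*α⌋ with hZdef
  have hc : (n:ℝ) + (m:ℝ) + 1 = (Q:ℝ) := by exact_mod_cast hnm
  have hZ : θn + θm = (Z:ℝ) - α + ε := by
    rw [hθndef, hθmdef, hεdef, hZdef]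
    have e1 : Int.fract ((n:ℝ)*α) = (n:ℝ)*α - ⌊(n:ℝ)*α⌋ := rfl
    have e2 : Int.fract ((m:ℝ)*α) = (m:ℝ)*α - ⌊(m:ℝ)*α⌋ := rfl
    rw [e1, e2]
    push_cast
    linear_combination α * hc
  have habs := abs_lt.1 hεα
  have habs' := abs_lt.1 hεα'
  have hZval : Z = 1 ∨ Z = 2 := by
    have h0 : (0:ℝ) < (Z:ℝ) := by linarith
    have h3 : (Z:ℝ) < 3 := by linarith
    have h0' : (0:ℤ) < Z := by exact_mod_cast h0
    have h3' : Z < 3 := by exact_mod_cast h3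
    omega
  have hmQ : m < Q := by omega
  have hnQ : n < Q := by omega
  rcases hZval with hZ1 | hZ2
  · -- θm < ε
    have hZR : ((Z:ℤ):ℝ) = 1 := by rw [hZ1]; norm_num
    have h1 : θm < ε := by rw [hZR] at hZ; linarith
    have h2 := best m hm hmQ ⌊(m:ℝ)*α⌋
    have h3 : |(m:ℝ)*α - ⌊(m:ℝ)*α⌋| = θm := by
      rw [abs_of_pos]; · rfl
      · exact hθm0
    rw [h3] at h2
    have : ε ≤ |ε| := le_abs_self ε
    linarith
  · -- 1 - θn < -ε
    have hZR : ((Z:ℤ):ℝ) = 2 := by rw [hZ2]; norm_num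
    have h1 : 1 + ε < θn := by rw [hZR] at hZ; linarith
    have h2 := best n hn hnQ (⌊(n:ℝ)*α⌋ + 1)
    have h3 : |(n:ℝ)*α - (⌊(n:ℝ)*α⌋ + 1 : ℤ)| = 1 - θn := by
      rw [abs_of_neg]
      · push_cast
        have e1 : θn = (n:ℝ)*α - ⌊(n:ℝ)*α⌋ := rfl
        linarith
      · push_cast
        have e1 : θn = (n:ℝ)*α - ⌊(n:ℝ)*α⌋ := rfl
        linarith
    rw [h3] at h2
    have : -ε ≤ |ε| := neg_le_abs ε
    linarith

/-- For irrational `α ∈ (0,1)` with continued fraction denominators `q k`, the word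
`v 1 v 2 … v (q k - 2)` of the characteristic Sturmian sequence
`v n = χ_[1-α,1)(n α mod 1)` is a palindrome, for every `k`. -/
theorem sturmian_prefix_palindrome (α : ℝ) (hirr : Irrational α)
    (hα0 : 0 < α) (hα1 : α < 1)
    (v : ℕ → Bool)
    (hv : ∀ n : ℕ, v n = decide (Int.fract (n * α) ∈ Set.Ico (1 - α) 1))
    (q : ℕ → ℕ) (hq : ∀ k, (q k : ℝ) = (GenContFract.of α).dens k) :
    ∀ k : ℕ, List.Palindrome ((List.range (q k - 2)).map (fun i => v (i + 1))) := by
  intro k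
  by_cases h3 : 3 ≤ q k
  · have hk1 : 1 ≤ k := by
      by_contra hk
      push_neg at hk
      interval_cases k
      have h0 := hq 0
      rw [zeroth_den_eq_one] at h0
      have : q 0 = 1 := by exact_mod_cast h0
      omega
    have key : ∀ n m : ℕ, 1 ≤ n → 1 ≤ m → n + m + 1 = q k → v n = v m := by
      intro n m hn hm hnm
      rw [hv n, hv m]
      apply decide_eq_decide.2
      simp only [Set.mem_Ico]
      constructor
      · rintro ⟨h1, -⟩
        exact ⟨my_core hirr hα0 hα1 k (q k) hk1 (hq k) h3 n m hn hm hnm h1,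
          Int.fract_lt_one _⟩
      · rintro ⟨h1, -⟩
        exact ⟨my_core hirr hα0 hα1 k (q k) hk1 (hq k) h3 m n hm hn (by omega) h1,
          Int.fract_lt_one _⟩
    apply List.Palindrome.of_reverse_eq
    apply List.ext_getElem (by simp)
    intro i h1 h2
    simp only [List.length_reverse, List.length_map, List.length_range] at h1 h2
    rw [List.getElem_reverse]
    simp only [List.getElem_map, List.getElem_range, List.length_map, List.length_range]
    have harith : q k - 2 - 1 - i + 1 = q k - 2 - i := by omega
    rw [harith]
    exact key (q k - 2 - i) (i + 1) (by omega) (by omega) (by omega)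
  · have h0 : q k - 2 = 0 := by omega
    rw [h0]
    simp only [List.range_zero, List.map_nil]
    exact List.Palindrome.nil
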